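/- Let χ : ℝ → [0, ∞) be a continuously differentiable, compactly supported function with χ(0) = 1. Then for every Schwartz function ψ : ℝ → ℝ, 2ψ(0)² ≤ ∫_ℝ ( |χ'(x)| + |x·χ'(x)| + x²·χ(x) )·ψ(x)² dx + 2∫_ℝ χ(x)·ψ'(x)² dx. -/

import Mathlib

open MeasureTheory

/-- Let `χ : ℝ → [0, ∞)` be a continuously differentiable,
compactly supported function with `χ(0) = 1`.  Then for every Schwartz function
`ψ : ℝ → ℝ`,
`2ψ(0)² ≤ ∫ (|χ'| + |x·χ'| + x²·χ)·ψ² dx + 2∫ χ·ψ'² dx`. -/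
theorem pointwise_value_by_localized_energy
    (χ : ℝ → ℝ) (hχ : ContDiff ℝ 1 χ) (hχ0 : ∀ x : ℝ, 0 ≤ χ x)
    (hsupp : HasCompactSupport χ) (hχ1 : χ 0 = 1) :
    ∀ ψ : SchwartzMap ℝ ℝ,
      2 * (ψ 0) ^ 2
        ≤ (∫ x : ℝ, (|deriv χ x| + |x * deriv χ x| + x ^ 2 * χ x) * (ψ x) ^ 2)
          + 2 * ∫ x : ℝ, χ x * (deriv ψ x) ^ 2 := by
  intro ψ
  set c : ℝ → ℝ := deriv χ with hc_def
  have hψ1 : ContDiff ℝ 1 (ψ : ℝ → ℝ) := ψ.smooth 1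
  have hψd : Differentiable ℝ (ψ : ℝ → ℝ) := hψ1.differentiable one_ne_zero
  have hχd : Differentiable ℝ χ := hχ.differentiable one_ne_zero
  have hccont : Continuous c := hχ.continuous_deriv le_rfl
  have hψcont : Continuous (ψ : ℝ → ℝ) := ψ.continuous
  have hdψcont : Continuous (deriv (ψ : ℝ → ℝ)) := (ψ.smooth 2).continuous_deriv one_le_two
  -- F = χ ψ²
  set F : ℝ → ℝ := fun x => χ x * ψ x ^ 2 with hF_def
  have hF1 : ContDiff ℝ 1 F := hχ.mul (hψ1.pow 2)
  have hFsupp : HasCompactSupport F := hsupp.mul_right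
  have hFderiv : ∀ x, HasDerivAt F (c x * ψ x ^ 2 + χ x * (2 * ψ x * deriv (ψ : ℝ → ℝ) x)) x := by
    intro x
    have h1 : HasDerivAt χ (c x) x := (hχd x).hasDerivAt
    have h2 : HasDerivAt (fun y => (ψ : ℝ → ℝ) y ^ 2)
        (2 * ψ x * deriv (ψ : ℝ → ℝ) x) x := by
      simpa [mul_comm, mul_assoc, mul_left_comm] using ((hψd x).hasDerivAt).fun_pow 2
    exact h1.mul h2
  have hFderiv' : ∀ x, deriv F x = c x * ψ x ^ 2 + χ x * (2 * ψ x * deriv (ψ : ℝ → ℝ) x) :=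
    fun x => (hFderiv x).deriv
  have hF'cont : Continuous (deriv F) := hF1.continuous_deriv le_rfl
  have hF'supp : HasCompactSupport (deriv F) := hFsupp.deriv
  -- integrability helpers
  have habs : Integrable (fun x => |deriv F x|) :=
    (hF'cont.abs).integrable_of_hasCompactSupport (hF'supp.comp_left (g := abs) (by simp))
  have hI1 : Integrable (fun x => |c x| * ψ x ^ 2) :=
    (hccont.abs.mul (hψcont.pow 2)).integrable_of_hasCompactSupport
      ((hsupp.deriv.comp_left (g := abs) (by simp)).mul_right)
  have hxc : HasCompactSupport (fun x : ℝ => x * c x) := hsupp.deriv.mul_left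
  have hI2 : Integrable (fun x => |x * c x| * ψ x ^ 2) :=
    ((continuous_id.mul hccont).abs.mul (hψcont.pow 2)).integrable_of_hasCompactSupport
      ((hxc.comp_left (g := abs) (by simp)).mul_right)
  have hI3 : Integrable (fun x => x ^ 2 * χ x * ψ x ^ 2) :=
    ((((continuous_id.pow 2).mul hχ.continuous).mul (hψcont.pow 2) :
      Continuous (fun x : ℝ => x ^ 2 * χ x * ψ x ^ 2))).integrable_of_hasCompactSupport
      ((hsupp.mul_left (f := fun x : ℝ => x ^ 2)).mul_right :
        HasCompactSupport (fun x : ℝ => x ^ 2 * χ x * ψ x ^ 2))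
  have hI4 : Integrable (fun x => χ x * deriv (ψ : ℝ → ℝ) x ^ 2) :=
    (hχ.continuous.mul (hdψcont.pow 2)).integrable_of_hasCompactSupport hsupp.mul_right
  have hI5 : Integrable F :=
    (hχ.continuous.mul (hψcont.pow 2)).integrable_of_hasCompactSupport hFsupp
  have hxF' : Integrable (fun x => x * deriv F x) :=
    (continuous_id.mul hF'cont).integrable_of_hasCompactSupport hF'supp.mul_left
  -- Step 1 : 2 F 0 ≤ ∫ |deriv F|
  have step1 : 2 * F 0 ≤ ∫ x : ℝ, |deriv F x| := by
    have ha : ∫ x in Set.Iic (0:ℝ), deriv F x = F 0 :=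
      HasCompactSupport.integral_Iic_deriv_eq hF1 hFsupp 0
    have hb : ∫ x in Set.Ioi (0:ℝ), deriv F x = -F 0 :=
      HasCompactSupport.integral_Ioi_deriv_eq hF1 hFsupp 0
    have h1 : |∫ x in Set.Iic (0:ℝ), deriv F x| ≤ ∫ x in Set.Iic (0:ℝ), |deriv F x| := by
      simpa [Real.norm_eq_abs] using
        norm_integral_le_integral_norm (μ := volume.restrict (Set.Iic 0)) (f := deriv F)
    have h2 : |∫ x in Set.Ioi (0:ℝ), deriv F x| ≤ ∫ x in Set.Ioi (0:ℝ), |deriv F x| := by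
      simpa [Real.norm_eq_abs] using
        norm_integral_le_integral_norm (μ := volume.restrict (Set.Ioi 0)) (f := deriv F)
    have hsum : (∫ x in Set.Iic (0:ℝ), |deriv F x|) + ∫ x in Set.Ioi (0:ℝ), |deriv F x|
        = ∫ x : ℝ, |deriv F x| :=
      intervalIntegral.integral_Iic_add_Ioi habs.integrableOn habs.integrableOn
    rw [ha] at h1
    rw [hb] at h2
    calc 2 * F 0 = F 0 + -(-F 0) := by ring
    _ ≤ |F 0| + |(-F 0 : ℝ)| := by
        gcongr <;> [exact le_abs_self _; exact neg_le_abs _]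
    _ ≤ (∫ x in Set.Iic (0:ℝ), |deriv F x|) + ∫ x in Set.Ioi (0:ℝ), |deriv F x| := by
        exact add_le_add h1 h2
    _ = ∫ x : ℝ, |deriv F x| := hsum
  -- Step 2 : ∫ |deriv F| ≤ ∫|c|ψ² + ∫χψ² + ∫χψ'²
  have step2 : (∫ x : ℝ, |deriv F x|)
      ≤ (∫ x, |c x| * ψ x ^ 2) + (∫ x, F x) + ∫ x, χ x * deriv (ψ : ℝ → ℝ) x ^ 2 := by
    have e0 : (∫ x : ℝ, (|c x| * ψ x ^ 2 + F x)) = (∫ x, |c x| * ψ x ^ 2) + ∫ x, F x :=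
      integral_add hI1 hI5
    have e1 : (∫ x : ℝ, (|c x| * ψ x ^ 2 + F x + χ x * deriv (ψ : ℝ → ℝ) x ^ 2))
        = (∫ x : ℝ, (|c x| * ψ x ^ 2 + F x)) + ∫ x, χ x * deriv (ψ : ℝ → ℝ) x ^ 2 :=
      integral_add (hI1.add hI5) hI4
    rw [← e0, ← e1]
    refine integral_mono habs ((hI1.add hI5).add hI4) ?_
    intro x
    simp only []
    rw [hFderiv' x]
    simp only [hF_def]
    have h0 := hχ0 x
    have h1 := le_abs_self (c x)
    have h2 := neg_abs_le (c x)
    have h3 := sq_nonneg (ψ x)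
    rw [abs_le]
    constructor <;> nlinarith [mul_nonneg h0 (sq_nonneg (ψ x + deriv (ψ : ℝ → ℝ) x)),
      mul_nonneg h0 (sq_nonneg (ψ x - deriv (ψ : ℝ → ℝ) x))]
  -- Step 3 : ∫ χψ² ≤ ∫|x c|ψ² + ∫ x²χψ² + ∫ χψ'²
  have step3 : (∫ x, F x)
      ≤ (∫ x, |x * c x| * ψ x ^ 2) + (∫ x, x ^ 2 * χ x * ψ x ^ 2)
        + ∫ x, χ x * deriv (ψ : ℝ → ℝ) x ^ 2 := by
    -- G = x F x, ∫ deriv G = 0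
    set G : ℝ → ℝ := fun x => x * F x with hG_def
    have hG1 : ContDiff ℝ 1 G := contDiff_id.mul hF1
    have hGsupp : HasCompactSupport G := hFsupp.mul_left
    have hGderiv : ∀ x, deriv G x = F x + x * deriv F x := by
      intro x
      have : HasDerivAt G (1 * F x + x * deriv F x) x :=
        (hasDerivAt_id x).mul ((hF1.differentiable one_ne_zero x).hasDerivAt)
      simpa using this.deriv
    have hzero : (∫ x : ℝ, deriv G x) = 0 := by
      have ha : ∫ x in Set.Iic (0:ℝ), deriv G x = G 0 :=
        HasCompactSupport.integral_Iic_deriv_eq hG1 hGsupp 0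
      have hb : ∫ x in Set.Ioi (0:ℝ), deriv G x = -G 0 :=
        HasCompactSupport.integral_Ioi_deriv_eq hG1 hGsupp 0
      have hGint : Integrable (deriv G) :=
        (hG1.continuous_deriv le_rfl).integrable_of_hasCompactSupport hGsupp.deriv
      rw [← intervalIntegral.integral_Iic_add_Ioi hGint.integrableOn hGint.integrableOn, ha, hb]
      simp [hG_def]
    have hsplit : (∫ x : ℝ, deriv G x) = (∫ x, F x) + ∫ x, x * deriv F x := by
      rw [← integral_add hI5 hxF']
      exact integral_congr_ae (Filter.Eventually.of_forall fun x => hGderiv x)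
    have hFeq : (∫ x, F x) = ∫ x, -(x * deriv F x) := by
      have : (∫ x, F x) + ∫ x, x * deriv F x = 0 := by rw [← hsplit]; exact hzero
      rw [integral_neg]; linarith
    have e0 : (∫ x : ℝ, (|x * c x| * ψ x ^ 2 + x ^ 2 * χ x * ψ x ^ 2))
        = (∫ x, |x * c x| * ψ x ^ 2) + ∫ x, x ^ 2 * χ x * ψ x ^ 2 := integral_add hI2 hI3
    have e1 : (∫ x : ℝ, (|x * c x| * ψ x ^ 2 + x ^ 2 * χ x * ψ x ^ 2
          + χ x * deriv (ψ : ℝ → ℝ) x ^ 2))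
        = (∫ x : ℝ, (|x * c x| * ψ x ^ 2 + x ^ 2 * χ x * ψ x ^ 2))
          + ∫ x, χ x * deriv (ψ : ℝ → ℝ) x ^ 2 := integral_add (hI2.add hI3) hI4
    rw [hFeq, ← e0, ← e1]
    refine integral_mono hxF'.neg ((hI2.add hI3).add hI4) ?_
    intro x
    simp only []
    rw [hFderiv' x]
    have h0 := hχ0 x
    have h1 := neg_abs_le (x * c x)
    have h3 := sq_nonneg (ψ x)
    nlinarith [mul_nonneg h0 (sq_nonneg (x * ψ x + deriv (ψ : ℝ → ℝ) x))]
  -- assemble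
  have hsplitRHS : (∫ x : ℝ, (|c x| + |x * c x| + x ^ 2 * χ x) * ψ x ^ 2)
      = (∫ x, |c x| * ψ x ^ 2) + (∫ x, |x * c x| * ψ x ^ 2)
        + ∫ x, x ^ 2 * χ x * ψ x ^ 2 := by
    have e0 : (∫ x : ℝ, (|c x| * ψ x ^ 2 + |x * c x| * ψ x ^ 2))
        = (∫ x, |c x| * ψ x ^ 2) + ∫ x, |x * c x| * ψ x ^ 2 := integral_add hI1 hI2
    have e1 : (∫ x : ℝ, (|c x| * ψ x ^ 2 + |x * c x| * ψ x ^ 2 + x ^ 2 * χ x * ψ x ^ 2))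
        = (∫ x : ℝ, (|c x| * ψ x ^ 2 + |x * c x| * ψ x ^ 2)) + ∫ x, x ^ 2 * χ x * ψ x ^ 2 :=
      integral_add (hI1.add hI2) hI3
    rw [← e0, ← e1]
    exact integral_congr_ae (Filter.Eventually.of_forall fun x => by ring)
  have hF0 : F 0 = ψ 0 ^ 2 := by simp [hF_def, hχ1]
  rw [hsplitRHS]
  have := step1.trans (step2.trans (by linarith [step3] :
    (∫ x, |c x| * ψ x ^ 2) + (∫ x, F x) + (∫ x, χ x * deriv (ψ : ℝ → ℝ) x ^ 2)
      ≤ (∫ x, |c x| * ψ x ^ 2) + ((∫ x, |x * c x| * ψ x ^ 2) + (∫ x, x ^ 2 * χ x * ψ x ^ 2)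
        + 2 * ∫ x, χ x * deriv (ψ : ℝ → ℝ) x ^ 2)))
  rw [hF0] at this
  linarith
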